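/- Let q < 0, let Q be a star body in ℝ^n (radial function ρ_Q positive and continuous), and let K be a convex body in ℝ^n containing the origin in its interior. Define Ṽ_q(K,Q) = (1/n)∫_{S^{n-1}} ρ_K(u)^q ρ_Q(u)^{n-q} du. Then there exist positive constants c, C depending only on n, q, min ρ_Q, max ρ_Q such that c·(min_{S^{n-1}} ρ_K)^q ≤ Ṽ_q(K,Q) ≤ C·(min_{S^{n-1}} ρ_K)^q. -/

import Mathlib

open Metric MeasureTheory
open scoped RealInnerProductSpace

/-- The radial function `ρ_K(u) = max{λ > 0 : λu ∈ K}`. -/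
noncomputable def radFn {n : ℕ} (K : Set (EuclideanSpace ℝ (Fin n)))
    (u : EuclideanSpace ℝ (Fin n)) : ℝ :=
  sSup {r : ℝ | 0 < r ∧ r • u ∈ K}

section aux

variable {n : ℕ} {K : Set (EuclideanSpace ℝ (Fin n))}

lemma radFn_eq_inv_gauge (hKconv : Convex ℝ K) (hKcomp : IsCompact K)
    (h0 : (0 : EuclideanSpace ℝ (Fin n)) ∈ interior K)
    {u : EuclideanSpace ℝ (Fin n)} (hu : u ≠ 0) :
    radFn K u = (gauge K u)⁻¹ := by
  have hnhds : K ∈ nhds (0 : EuclideanSpace ℝ (Fin n)) := mem_interior_iff_mem_nhds.1 h0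
  have habs : Absorbent ℝ K := absorbent_nhds_zero hnhds
  have hb : Bornology.IsVonNBounded ℝ K := (NormedSpace.isVonNBounded_iff ℝ).2 hKcomp.isBounded
  have hg : 0 < gauge K u := (gauge_pos habs hb).2 hu
  have hset : {r : ℝ | 0 < r ∧ r • u ∈ K} = Set.Ioc 0 (gauge K u)⁻¹ := by
    ext r
    simp only [Set.mem_setOf_eq, Set.mem_Ioc]
    constructor
    · rintro ⟨hr, hmem⟩
      refine ⟨hr, ?_⟩
      have h1 : gauge K (r • u) ≤ 1 := gauge_le_one_of_mem hmem
      rw [gauge_smul_of_nonneg hr.le, smul_eq_mul] at h1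
      rw [← one_div, le_div_iff₀ hg]
      exact h1
    · rintro ⟨hr, hle⟩
      refine ⟨hr, ?_⟩
      have h1 : gauge K (r • u) ≤ 1 := by
        rw [gauge_smul_of_nonneg hr.le, smul_eq_mul]
        rw [← one_div, le_div_iff₀ hg] at hle
        exact hle
      have h2 := (gauge_le_one_iff_mem_closure hKconv hnhds).1 h1
      rwa [hKcomp.isClosed.closure_eq] at h2
  rw [radFn, hset, csSup_Ioc (by positivity)]


lemma radFn_pos (hKconv : Convex ℝ K) (hKcomp : IsCompact K)
    (h0 : (0 : EuclideanSpace ℝ (Fin n)) ∈ interior K)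
    {u : EuclideanSpace ℝ (Fin n)} (hu : u ≠ 0) : 0 < radFn K u := by
  have hnhds : K ∈ nhds (0 : EuclideanSpace ℝ (Fin n)) := mem_interior_iff_mem_nhds.1 h0
  have habs : Absorbent ℝ K := absorbent_nhds_zero hnhds
  have hb : Bornology.IsVonNBounded ℝ K := (NormedSpace.isVonNBounded_iff ℝ).2 hKcomp.isBounded
  rw [radFn_eq_inv_gauge hKconv hKcomp h0 hu]
  exact inv_pos.2 ((gauge_pos habs hb).2 hu)

lemma radFn_smul_mem (hKconv : Convex ℝ K) (hKcomp : IsCompact K)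
    (h0 : (0 : EuclideanSpace ℝ (Fin n)) ∈ interior K)
    {u : EuclideanSpace ℝ (Fin n)} (hu : u ≠ 0) : radFn K u • u ∈ K := by
  have hnhds : K ∈ nhds (0 : EuclideanSpace ℝ (Fin n)) := mem_interior_iff_mem_nhds.1 h0
  have habs : Absorbent ℝ K := absorbent_nhds_zero hnhds
  have hb : Bornology.IsVonNBounded ℝ K := (NormedSpace.isVonNBounded_iff ℝ).2 hKcomp.isBounded
  have hg : 0 < gauge K u := (gauge_pos habs hb).2 hu
  rw [radFn_eq_inv_gauge hKconv hKcomp h0 hu]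
  have h1 : gauge K ((gauge K u)⁻¹ • u) ≤ 1 := by
    rw [gauge_smul_of_nonneg (inv_pos.2 hg).le, smul_eq_mul, inv_mul_cancel₀ hg.ne']
  have h2 := (gauge_le_one_iff_mem_closure hKconv hnhds).1 h1
  rwa [hKcomp.isClosed.closure_eq] at h2

lemma ne_zero_of_mem_sphere' {u : EuclideanSpace ℝ (Fin n)} (hu : u ∈ sphere (0 : EuclideanSpace ℝ (Fin n)) 1) :
    u ≠ 0 := by
  rw [mem_sphere_zero_iff_norm] at hu
  intro h; rw [h] at hu; simp at hu

lemma radFn_contOn (hKconv : Convex ℝ K) (hKcomp : IsCompact K)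
    (h0 : (0 : EuclideanSpace ℝ (Fin n)) ∈ interior K) :
    ContinuousOn (radFn K) (sphere (0 : EuclideanSpace ℝ (Fin n)) 1) := by
  have hnhds : K ∈ nhds (0 : EuclideanSpace ℝ (Fin n)) := mem_interior_iff_mem_nhds.1 h0
  have habs : Absorbent ℝ K := absorbent_nhds_zero hnhds
  have hb : Bornology.IsVonNBounded ℝ K := (NormedSpace.isVonNBounded_iff ℝ).2 hKcomp.isBounded
  have h1 : ContinuousOn (fun u => (gauge K u)⁻¹) (sphere (0 : EuclideanSpace ℝ (Fin n)) 1) :=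
    (continuous_gauge hKconv hnhds).continuousOn.inv₀ fun u hu =>
      ((gauge_pos habs hb).2 (ne_zero_of_mem_sphere' hu)).ne'
  exact h1.congr fun u hu => radFn_eq_inv_gauge hKconv hKcomp h0 (ne_zero_of_mem_sphere' hu)

end aux

set_option maxHeartbeats 1000000 in
open scoped Pointwise in
theorem dual_mixed_volume_estimate_neg (n : ℕ) (hn : 0 < n) (q : ℝ) (hq : q < 0)
    (ρmin ρmax : ℝ) (hρmin : 0 < ρmin) (hρ : ρmin ≤ ρmax) :
    ∃ c C : ℝ, 0 < c ∧ 0 < C ∧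
      ∀ ρQ : EuclideanSpace ℝ (Fin n) → ℝ, ContinuousOn ρQ (sphere 0 1) →
        (∀ u ∈ sphere (0 : EuclideanSpace ℝ (Fin n)) 1, ρmin ≤ ρQ u ∧ ρQ u ≤ ρmax) →
      ∀ K : Set (EuclideanSpace ℝ (Fin n)), Convex ℝ K → IsCompact K →
        (0 : EuclideanSpace ℝ (Fin n)) ∈ interior K →
        c * sInf (radFn K '' sphere (0 : EuclideanSpace ℝ (Fin n)) 1) ^ q ≤
          ((1 : ℝ) / n) * (∫ u : sphere (0 : EuclideanSpace ℝ (Fin n)) 1,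
            radFn K (u : EuclideanSpace ℝ (Fin n)) ^ q *
              ρQ (u : EuclideanSpace ℝ (Fin n)) ^ ((n : ℝ) - q)
            ∂(volume : Measure (EuclideanSpace ℝ (Fin n))).toSphere) ∧
        ((1 : ℝ) / n) * (∫ u : sphere (0 : EuclideanSpace ℝ (Fin n)) 1,
            radFn K (u : EuclideanSpace ℝ (Fin n)) ^ q *
              ρQ (u : EuclideanSpace ℝ (Fin n)) ^ ((n : ℝ) - q)
            ∂(volume : Measure (EuclideanSpace ℝ (Fin n))).toSphere) ≤
          C * sInf (radFn K '' sphere (0 : EuclideanSpace ℝ (Fin n)) 1) ^ q := by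
  classical
  set E := EuclideanSpace ℝ (Fin n) with hE
  haveI : Nonempty (Fin n) := ⟨⟨0, hn⟩⟩
  haveI : Nontrivial E := by
    refine Module.nontrivial_of_finrank_pos (R := ℝ) (M := E) ?_
    rw [finrank_euclideanSpace_fin]; exact hn
  set σ := (volume : Measure E).toSphere with hσ
  have hdim : Module.finrank ℝ E = n := finrank_euclideanSpace_fin
  set κ := ((n : ENNReal) * volume (ball (0 : E) 8⁻¹)).toReal with hκdef
  have hκpos : 0 < κ := by
    apply ENNReal.toReal_pos
    · refine mul_ne_zero (by simpa using hn.ne') ?_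
      exact (measure_ball_pos volume _ (by norm_num)).ne'
    · exact ENNReal.mul_ne_top (ENNReal.natCast_ne_top n) measure_ball_lt_top.ne
  set T := (σ Set.univ).toReal with hTdef
  have hTpos : 0 < T := by
    apply ENNReal.toReal_pos
    · rw [hσ, Measure.toSphere_apply_univ, hdim]
      refine mul_ne_zero (by simpa using hn.ne') ?_
      exact (measure_ball_pos volume _ (by norm_num)).ne'
    · exact (measure_ne_top σ _)
  have hnq : (0 : ℝ) ≤ (n : ℝ) - q := by
    have : (0:ℝ) ≤ (n:ℝ) := Nat.cast_nonneg n
    linarith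
  refine ⟨(1 / n) * 2 ^ q * ρmin ^ ((n : ℝ) - q) * κ,
    (1 / n) * ρmax ^ ((n : ℝ) - q) * T, ?_, ?_, ?_⟩
  · have h2q : (0:ℝ) < 2 ^ q := Real.rpow_pos_of_pos (by norm_num) q
    have : (0:ℝ) < ρmin ^ ((n:ℝ) - q) := Real.rpow_pos_of_pos hρmin _
    have hn' : (0:ℝ) < (1:ℝ)/n := by positivity
    positivity
  · have : (0:ℝ) < ρmax ^ ((n:ℝ) - q) := Real.rpow_pos_of_pos (lt_of_lt_of_le hρmin hρ) _
    have hn' : (0:ℝ) < (1:ℝ)/n := by positivity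
    positivity
  intro ρQ hρQcont hρQbd K hKconv hKcomp h0
  -- the minimum of the radial function
  set m := sInf (radFn K '' sphere (0 : E) 1) with hmdef
  have hsne : (sphere (0 : E) 1).Nonempty := NormedSpace.sphere_nonempty.2 zero_le_one
  have hcont := radFn_contOn hKconv hKcomp h0
  have himg : IsCompact (radFn K '' sphere (0 : E) 1) :=
    (isCompact_sphere (0:E) 1).image_of_continuousOn hcont
  have hine : (radFn K '' sphere (0 : E) 1).Nonempty := hsne.image _
  have hm_mem : m ∈ radFn K '' sphere (0 : E) 1 := himg.sInf_mem hine
  obtain ⟨u₀, hu₀s, hu₀⟩ := hm_mem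
  have hm_pos : 0 < m := by
    rw [← hu₀]
    exact radFn_pos hKconv hKcomp h0 (ne_zero_of_mem_sphere' hu₀s)
  have hm_le : ∀ u ∈ sphere (0 : E) 1, m ≤ radFn K u := fun u hu =>
    csInf_le himg.bddBelow ⟨u, hu, rfl⟩
  -- supporting hyperplane
  obtain ⟨f, hfnorm, hKle⟩ :
      ∃ f : E →L[ℝ] ℝ, 0 < ‖f‖ ∧ ∀ x ∈ K, f x ≤ m * ‖f‖ := by
    have hnhds : K ∈ nhds (0 : E) := mem_interior_iff_mem_nhds.1 h0
    have heq := radFn_eq_inv_gauge hKconv hKcomp h0 (ne_zero_of_mem_sphere' hu₀s)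
    have hgu₀ : gauge K u₀ = m⁻¹ := by
      have h1 : (gauge K u₀)⁻¹ = m := by rw [← heq, hu₀]
      rw [← h1, inv_inv]
    have hfront : gauge K (m • u₀) = 1 := by
      rw [gauge_smul_of_nonneg hm_pos.le, smul_eq_mul, hgu₀, mul_inv_cancel₀ hm_pos.ne']
    have hnotint : m • u₀ ∉ interior K := by
      intro h
      have h2 := (gauge_lt_one_iff_mem_interior hKconv hnhds).2 h
      rw [hfront] at h2
      exact lt_irrefl _ h2
    obtain ⟨f, hf⟩ := geometric_hahn_banach_open_point hKconv.interior isOpen_interior hnotint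
    have hc0 : 0 < f (m • u₀) := by simpa using hf 0 h0
    have hfne : f ≠ 0 := by intro h; rw [h] at hc0; simpa using hc0
    have hKle' : ∀ x ∈ K, f x ≤ f (m • u₀) := by
      intro x hx
      by_contra hcon
      push_neg at hcon
      set t := f (m • u₀) / f x with htdef
      have hfx : 0 < f x := lt_trans hc0 hcon
      have ht0 : 0 < t := div_pos hc0 hfx
      have hmem : t • x ∈ interior K := by
        have h2 := hKconv.combo_interior_closure_subset_interior (a := 1 - t) (b := t)
          (by have := (div_lt_one hfx).2 hcon; linarith) ht0.le (by ring)
        have h3 : (1 - t) • (0:E) + t • x ∈ (1-t) • interior K + t • closure K :=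
          Set.add_mem_add (Set.smul_mem_smul_set h0) (Set.smul_mem_smul_set (subset_closure hx))
        have h4 := h2 h3
        simpa [smul_zero] using h4
      have h5 := hf _ hmem
      rw [_root_.map_smul, smul_eq_mul, htdef, div_mul_cancel₀ _ hfx.ne'] at h5
      exact lt_irrefl _ h5
    refine ⟨f, norm_pos_iff.2 hfne, fun x hx => ?_⟩
    calc f x ≤ f (m • u₀) := hKle' x hx
      _ = m * f u₀ := by rw [_root_.map_smul, smul_eq_mul]
      _ ≤ m * ‖f‖ := by
          refine mul_le_mul_of_nonneg_left ?_ hm_pos.le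
          calc f u₀ ≤ ‖f u₀‖ := le_abs_self _
            _ ≤ ‖f‖ * ‖u₀‖ := f.le_opNorm u₀
            _ = ‖f‖ := by rw [mem_sphere_zero_iff_norm.1 hu₀s, mul_one]
  -- cap estimate
  set cap : Set (sphere (0 : E) 1) := {u | ‖f‖ / 2 ≤ f (u : E)} with hcapdef
  have hcapm : MeasurableSet cap :=
    (isClosed_le continuous_const (f.continuous.comp continuous_subtype_val)).measurableSet
  have hcap_rad : ∀ u ∈ cap, radFn K (u : E) ≤ 2 * m := by
    intro u hu
    have hune : (u : E) ≠ 0 := ne_zero_of_mem_sphere' u.2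
    have hrpos : 0 < radFn K (u : E) := radFn_pos hKconv hKcomp h0 hune
    have hx : radFn K (u : E) • (u : E) ∈ K := radFn_smul_mem hKconv hKcomp h0 hune
    have h1 := hKle _ hx
    rw [_root_.map_smul, smul_eq_mul] at h1
    have h2 : ‖f‖ / 2 ≤ f (u : E) := hu
    have h3 : radFn K (u:E) * (‖f‖ / 2) ≤ m * ‖f‖ :=
      le_trans (mul_le_mul_of_nonneg_left h2 hrpos.le) h1
    nlinarith [hfnorm]
  have hcap_meas : κ ≤ (σ cap).toReal := by
    set v := (InnerProductSpace.toDual ℝ E).symm f with hvdef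
    have hvf : ∀ x : E, ⟪v, x⟫ = f x := fun x => InnerProductSpace.toDual_symm_apply
    have hvnorm : ‖v‖ = ‖f‖ := LinearIsometryEquiv.norm_map _ f
    have hvne : ‖v‖ ≠ 0 := by rw [hvnorm]; exact hfnorm.ne'
    set w : E := ‖v‖⁻¹ • v with hwdef
    have hwnorm : ‖w‖ = 1 := by
      rw [hwdef, norm_smul, norm_inv, norm_norm, inv_mul_cancel₀ hvne]
    have hfw : f w = ‖f‖ := by
      rw [← hvf w, hwdef, real_inner_smul_right, real_inner_self_eq_norm_sq, ← hvnorm]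
      field_simp
    have hball : ball ((3/4 : ℝ) • w) 8⁻¹ ⊆ Set.Ioo (0:ℝ) 1 • (Subtype.val '' cap) := by
      intro x hx
      have hd : ‖x - (3/4 : ℝ) • w‖ < 8⁻¹ := by rwa [mem_ball_iff_norm] at hx
      have hwn : ‖(3/4 : ℝ) • w‖ = 3/4 := by
        rw [norm_smul, hwnorm]; norm_num
      have hub : ‖x‖ < 7/8 := by
        have h1 : ‖x‖ ≤ ‖(3/4:ℝ) • w‖ + ‖x - (3/4:ℝ) • w‖ := by
          have := norm_add_le ((3/4:ℝ) • w) (x - (3/4:ℝ) • w)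
          simpa using this
        rw [hwn] at h1
        linarith
      have hlb : (5:ℝ)/8 < ‖x‖ := by
        have h1 : ‖(3/4:ℝ) • w‖ - ‖x‖ ≤ ‖(3/4:ℝ) • w - x‖ := norm_sub_norm_le _ _
        rw [hwn, norm_sub_rev] at h1
        linarith
      have hxpos : (0:ℝ) < ‖x‖ := by linarith
      have hfx : (5:ℝ)/8 * ‖f‖ ≤ f x := by
        have h1 : f x = f ((3/4:ℝ) • w) + f (x - (3/4:ℝ) • w) := by
          rw [← map_add]; congr 1; abel
        have h2 : |f (x - (3/4:ℝ) • w)| ≤ ‖f‖ * 8⁻¹ := by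
          calc |f (x - (3/4:ℝ) • w)| = ‖f (x - (3/4:ℝ) • w)‖ := rfl
            _ ≤ ‖f‖ * ‖x - (3/4:ℝ) • w‖ := f.le_opNorm _
            _ ≤ ‖f‖ * 8⁻¹ := mul_le_mul_of_nonneg_left hd.le (norm_nonneg f)
        have h3 : f ((3/4:ℝ) • w) = 3/4 * ‖f‖ := by
          rw [_root_.map_smul, smul_eq_mul, hfw]
        have h4 := abs_le.1 h2
        rw [h1, h3]
        linarith [h4.1]
      set u : E := ‖x‖⁻¹ • x with hudef
      have hun : ‖u‖ = 1 := by
        rw [hudef, norm_smul, norm_inv, norm_norm, inv_mul_cancel₀ hxpos.ne']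
      have hcapu : ‖f‖ / 2 ≤ f u := by
        have hfx0 : 0 ≤ f x := le_trans (by positivity) hfx
        have hinv1 : (1:ℝ) ≤ ‖x‖⁻¹ := by
          rw [le_inv_comm₀ one_pos hxpos]
          simpa using hub.le.trans (by norm_num)
        calc ‖f‖ / 2 ≤ 5/8 * ‖f‖ := by nlinarith [norm_nonneg f]
          _ ≤ f x := hfx
          _ = 1 * f x := (one_mul _).symm
          _ ≤ ‖x‖⁻¹ * f x := mul_le_mul_of_nonneg_right hinv1 hfx0
          _ = f u := by rw [hudef, _root_.map_smul, smul_eq_mul]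
      refine Set.mem_smul.2 ⟨‖x‖, ?_, u, ?_, ?_⟩
      · exact ⟨hxpos, by linarith⟩
      · exact ⟨⟨u, mem_sphere_zero_iff_norm.2 hun⟩, hcapu, rfl⟩
      · rw [hudef, smul_smul, mul_inv_cancel₀ hxpos.ne', one_smul]
    have h1 : σ cap = (n : ENNReal) * volume (Set.Ioo (0:ℝ) 1 • (Subtype.val '' cap)) := by
      rw [hσ, Measure.toSphere_apply' _ hcapm, hdim]
    have h2 : (n : ENNReal) * volume (ball ((3/4:ℝ) • w) 8⁻¹) ≤ σ cap := by
      rw [h1]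
      exact mul_le_mul_right (measure_mono hball) _
    rw [Measure.addHaar_ball_center] at h2
    exact ENNReal.toReal_mono (measure_ne_top σ _) h2
  -- the integrand
  set F : (sphere (0 : E) 1) → ℝ :=
    fun u => radFn K (u : E) ^ q * ρQ (u : E) ^ ((n : ℝ) - q) with hFdef
  have hrad_pos : ∀ u : sphere (0 : E) 1, 0 < radFn K (u : E) := fun u =>
    radFn_pos hKconv hKcomp h0 (ne_zero_of_mem_sphere' u.2)
  have hρQ_pos : ∀ u : sphere (0 : E) 1, 0 < ρQ (u : E) := fun u =>
    lt_of_lt_of_le hρmin (hρQbd _ u.2).1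
  have hFnonneg : ∀ u, 0 ≤ F u := fun u =>
    mul_nonneg (Real.rpow_nonneg (hrad_pos u).le _) (Real.rpow_nonneg (hρQ_pos u).le _)
  have hFbd : ∀ u, F u ≤ m ^ q * ρmax ^ ((n : ℝ) - q) := by
    intro u
    apply mul_le_mul
    · exact Real.rpow_le_rpow_of_nonpos hm_pos (hm_le _ u.2) hq.le
    · exact Real.rpow_le_rpow (hρQ_pos u).le (hρQbd _ u.2).2 hnq
    · exact Real.rpow_nonneg (hρQ_pos u).le _
    · exact Real.rpow_nonneg hm_pos.le _
  have hFcont : Continuous F := by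
    have h1 : Continuous fun u : sphere (0:E) 1 => radFn K (u : E) := hcont.restrict
    have h2 : Continuous fun u : sphere (0:E) 1 => ρQ (u : E) := hρQcont.restrict
    exact (h1.rpow_const fun u => Or.inl (hrad_pos u).ne').mul
      (h2.rpow_const fun u => Or.inr hnq)
  have hFint : Integrable F σ := by
    refine ⟨hFcont.aestronglyMeasurable, ?_⟩
    apply HasFiniteIntegral.of_bounded (C := m ^ q * ρmax ^ ((n : ℝ) - q))
    exact Filter.Eventually.of_forall fun u => by
      rw [Real.norm_of_nonneg (hFnonneg u)]; exact hFbd u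
  set I := ∫ u, F u ∂σ with hIdef
  have hIl : 2 ^ q * ρmin ^ ((n : ℝ) - q) * κ * m ^ q ≤ I := by
    have h1 : ∫ u in cap, F u ∂σ ≤ I :=
      setIntegral_le_integral hFint (Filter.Eventually.of_forall hFnonneg)
    have h2 : (2 ^ q * m ^ q * ρmin ^ ((n : ℝ) - q)) * (σ cap).toReal
        ≤ ∫ u in cap, F u ∂σ := by
      refine setIntegral_ge_of_const_le_real hcapm (measure_ne_top σ cap) (fun u hu => ?_)
        hFint.integrableOn
      have hr1 : (2 * m) ^ q ≤ radFn K (u : E) ^ q :=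
        Real.rpow_le_rpow_of_nonpos (hrad_pos u) (hcap_rad u hu) hq.le
      rw [Real.mul_rpow (by norm_num) hm_pos.le] at hr1
      have hr2 : ρmin ^ ((n : ℝ) - q) ≤ ρQ (u : E) ^ ((n : ℝ) - q) :=
        Real.rpow_le_rpow hρmin.le (hρQbd _ u.2).1 hnq
      exact mul_le_mul hr1 hr2 (Real.rpow_nonneg hρmin.le _)
        (Real.rpow_nonneg (hrad_pos u).le _)
    have h3 : (2 ^ q * m ^ q * ρmin ^ ((n : ℝ) - q)) * κ
        ≤ (2 ^ q * m ^ q * ρmin ^ ((n : ℝ) - q)) * (σ cap).toReal := by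
      apply mul_le_mul_of_nonneg_left hcap_meas
      have := Real.rpow_nonneg (hm_pos.le) q
      positivity
    calc 2 ^ q * ρmin ^ ((n : ℝ) - q) * κ * m ^ q
        = (2 ^ q * m ^ q * ρmin ^ ((n : ℝ) - q)) * κ := by ring
      _ ≤ (2 ^ q * m ^ q * ρmin ^ ((n : ℝ) - q)) * (σ cap).toReal := h3
      _ ≤ ∫ u in cap, F u ∂σ := h2
      _ ≤ I := h1
  have hIu : I ≤ ρmax ^ ((n : ℝ) - q) * T * m ^ q := by
    have h1 : I ≤ ∫ _ : sphere (0:E) 1, (m ^ q * ρmax ^ ((n : ℝ) - q)) ∂σ :=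
      integral_mono hFint (integrable_const _) hFbd
    rw [integral_const, smul_eq_mul] at h1
    calc I ≤ T * (m ^ q * ρmax ^ ((n : ℝ) - q)) := h1
      _ = ρmax ^ ((n : ℝ) - q) * T * m ^ q := by ring
  have hninv : (0:ℝ) ≤ 1 / n := by positivity
  constructor
  · calc (1 / (n:ℝ)) * 2 ^ q * ρmin ^ ((n : ℝ) - q) * κ * m ^ q
        = (1 / n) * (2 ^ q * ρmin ^ ((n : ℝ) - q) * κ * m ^ q) := by ring
      _ ≤ (1 / n) * I := mul_le_mul_of_nonneg_left hIl hninv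
  · calc (1 / (n:ℝ)) * I ≤ (1 / n) * (ρmax ^ ((n : ℝ) - q) * T * m ^ q) :=
        mul_le_mul_of_nonneg_left hIu hninv
      _ = (1 / n) * ρmax ^ ((n : ℝ) - q) * T * m ^ q := by ring
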